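/- Let X = ∏_{α∈A} X_α be a product of nonempty compact Hausdorff spaces, P ⊆ X a closed subset, and f : P → P a homeomorphism. If {B_i : i ∈ I} is an arbitrary family of f-admissible subsets of A, then B = ⋃_{i∈I} B_i is f-admissible. -/
import Mathlib


universe u v

open Set Topology

/-- The projection of the product `∀ i, X i` onto the partial product indexed by `B`. -/
def proj {I : Type u} {X : I → Type u} (B : Set I) (x : ∀ i, X i) : ∀ b : B, X b :=
  fun b => x b

/-- A set `B ⊆ I` is `f`-admissible for a homeomorphism `f : P ≃ₜ P` of a closed subset `P`
of the product `∀ i, X i` if there is a homeomorphism `f_B` of `P_B = π_B(P)` with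
`π_B ∘ f = f_B ∘ π_B` on `P`. -/
def IsAdmissible {I : Type u} {X : I → Type u} [∀ i, TopologicalSpace (X i)]
    (P : Set (∀ i, X i)) (f : P ≃ₜ P) (B : Set I) : Prop :=
  ∃ fB : (proj B '' P : Set (∀ b : B, X b)) ≃ₜ (proj B '' P : Set (∀ b : B, X b)),
    ∀ p : P, (fB ⟨proj B p.1, ⟨p.1, p.2, rfl⟩⟩).1 = proj B (f p).1

section Aux

variable {I : Type u} {X : I → Type u} [∀ i, TopologicalSpace (X i)]

lemma proj_continuous (B : Set I) : Continuous (proj (X := X) B) :=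
  continuous_pi fun _ => continuous_apply _

lemma admissible_compat {P : Set (∀ i, X i)} {f : P ≃ₜ P} {B : Set I}
    (h : IsAdmissible P f B) (p q : P) (hpq : proj B p.1 = proj B q.1) :
    proj B (f p).1 = proj B (f q).1 := by
  obtain ⟨fB, hfB⟩ := h
  rw [← hfB p, ← hfB q]
  exact congrArg Subtype.val (congrArg fB (Subtype.ext hpq))

lemma admissible_compat_symm {P : Set (∀ i, X i)} {f : P ≃ₜ P} {B : Set I}
    (h : IsAdmissible P f B) (p q : P) (hpq : proj B p.1 = proj B q.1) :
    proj B (f.symm p).1 = proj B (f.symm q).1 := by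
  obtain ⟨fB, hfB⟩ := h
  have key : ∀ p : P, proj B (f.symm p).1 = (fB.symm ⟨proj B p.1, ⟨p.1, p.2, rfl⟩⟩).1 := by
    intro p
    have h2 : fB ⟨proj B (f.symm p).1, ⟨_, (f.symm p).2, rfl⟩⟩
        = ⟨proj B p.1, ⟨p.1, p.2, rfl⟩⟩ := by
      apply Subtype.ext
      rw [hfB (f.symm p)]
      simp
    rw [← h2, fB.symm_apply_apply]
  rw [key p, key q]
  exact congrArg Subtype.val (congrArg fB.symm (Subtype.ext hpq))

lemma union_compat {P : Set (∀ i, X i)} {ι : Type v} {B : ι → Set I} {F : P → P}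
    (h : ∀ j, ∀ p q : P, proj (B j) p.1 = proj (B j) q.1 →
      proj (B j) (F p).1 = proj (B j) (F q).1)
    (p q : P) (hpq : proj (⋃ j, B j) p.1 = proj (⋃ j, B j) q.1) :
    proj (⋃ j, B j) (F p).1 = proj (⋃ j, B j) (F q).1 := by
  funext b
  obtain ⟨j, hj⟩ := mem_iUnion.mp b.2
  have h1 : proj (B j) p.1 = proj (B j) q.1 := by
    funext c
    exact congrFun hpq ⟨c.1, mem_iUnion.mpr ⟨j, c.2⟩⟩
  exact congrFun (h j p q h1) ⟨b.1, hj⟩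

end Aux

/-- An arbitrary union of `f`-admissible sets is `f`-admissible. -/
theorem stmt19 {I : Type u} {X : I → Type u} [∀ i, TopologicalSpace (X i)]
    [∀ i, CompactSpace (X i)] [∀ i, T2Space (X i)] [∀ i, Nonempty (X i)]
    (P : Set (∀ i, X i)) (hP : IsClosed P) (f : P ≃ₜ P)
    {ι : Type v} (B : ι → Set I) (hB : ∀ j, IsAdmissible P f (B j)) :
    IsAdmissible P f (⋃ j, B j) := by
  classical
  set U := ⋃ j, B j with hU
  have hcf : ∀ p q : P, proj U p.1 = proj U q.1 → proj U (f p).1 = proj U (f q).1 :=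
    union_compat (fun j => admissible_compat (hB j))
  have hcs : ∀ p q : P, proj U p.1 = proj U q.1 →
      proj U (f.symm p).1 = proj U (f.symm q).1 :=
    union_compat (fun j => admissible_compat_symm (hB j))
  let Q := (proj U '' P : Set (∀ b : U, X b))
  let g : P → Q := fun p => ⟨proj U p.1, ⟨p.1, p.2, rfl⟩⟩
  have hg_cont : Continuous g :=
    Continuous.subtype_mk ((proj_continuous U).comp continuous_subtype_val) _
  have hg_surj : Function.Surjective g := by
    rintro ⟨q, p, hp, rfl⟩; exact ⟨⟨p, hp⟩, rfl⟩
  haveI : CompactSpace P := isCompact_iff_compactSpace.mp hP.isCompact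
  haveI : CompactSpace Q :=
    isCompact_iff_compactSpace.mp (hP.isCompact.image (proj_continuous U))
  choose sec hsec using hg_surj
  let φ : Q → Q := fun q => g (f (sec q))
  let ψ : Q → Q := fun q => g (f.symm (sec q))
  have hφg : ∀ p : P, φ (g p) = g (f p) := fun p =>
    Subtype.ext (hcf (sec (g p)) p (congrArg Subtype.val (hsec (g p))))
  have hψg : ∀ p : P, ψ (g p) = g (f.symm p) := fun p =>
    Subtype.ext (hcs (sec (g p)) p (congrArg Subtype.val (hsec (g p))))
  have hleft : ∀ q, ψ (φ q) = q := by
    intro q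
    obtain ⟨p, rfl⟩ : ∃ p, g p = q := ⟨sec q, hsec q⟩
    rw [hφg, hψg, f.symm_apply_apply]
  have hright : ∀ q, φ (ψ q) = q := by
    intro q
    obtain ⟨p, rfl⟩ : ∃ p, g p = q := ⟨sec q, hsec q⟩
    rw [hψg, hφg, f.apply_symm_apply]
  have hquot : Topology.IsQuotientMap g :=
    (hg_cont.isClosedMap).isQuotientMap hg_cont (fun q => ⟨sec q, hsec q⟩)
  have hφc : Continuous φ := by
    rw [hquot.continuous_iff]
    have : φ ∘ g = g ∘ f := funext hφg
    rw [this]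
    exact hg_cont.comp f.continuous
  let e : Q ≃ Q := ⟨φ, ψ, hleft, hright⟩
  refine ⟨hφc.homeoOfEquivCompactToT2 (f := e), fun p => ?_⟩
  exact congrArg Subtype.val (hφg p)
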